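/- Let n ∈ ℕ, let q : ℝ → (Fin n → ℝ) be twice differentiable, let v ∈ (Fin n → ℝ) be a constant reference, let M : ℝ → Matrix (Fin n) (Fin n) ℝ and C : ℝ → Matrix (Fin n) (Fin n) ℝ be matrix-valued functions of time (the mass and Coriolis matrices evaluated along the trajectory), with each M(t) symmetric, and let K_P, K_D be constant n×n real matrices with K_P symmetric. Assume: (i) M is differentiable and its derivative satisfies M′(t) = C(t) + C(t)ᵀ for all t (skew-symmetry of Ṁ − 2C); (ii) the closed-loop Euler–Lagrange dynamics under PD control with gravity compensation hold: M(t) · q″(t) + C(t) · q′(t) = −K_P · (q(t) − v) − K_D · q′(t) for all t. Then the total energy V(t) = ½ q′(t)ᵀ M(t) q′(t) + ½ (q(t) − v)ᵀ K_P (q(t) − v) is differentiable with V′(t) = −q′(t)ᵀ K_D q′(t) for all t. (Equation (6) of the paper.) -/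

import Mathlib

open Matrix

lemma quad_hasDerivAt {n : ℕ} {a b : ℝ → Fin n → ℝ} {M : ℝ → Matrix (Fin n) (Fin n) ℝ}
    {a' b' : Fin n → ℝ} {Md : Matrix (Fin n) (Fin n) ℝ} {t : ℝ}
    (ha : ∀ i, HasDerivAt (fun s => a s i) (a' i) t)
    (hb : ∀ i, HasDerivAt (fun s => b s i) (b' i) t)
    (hM : ∀ i j, HasDerivAt (fun s => M s i j) (Md i j) t) :
    HasDerivAt (fun s => a s ⬝ᵥ M s *ᵥ b s)
      (a' ⬝ᵥ M t *ᵥ b t + a t ⬝ᵥ Md *ᵥ b t + a t ⬝ᵥ M t *ᵥ b') t := by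
  have key : HasDerivAt (fun s => ∑ i, ∑ j, a s i * (M s i j * b s j))
      (∑ i, ∑ j, (a' i * (M t i j * b t j) +
        a t i * (Md i j * b t j + M t i j * b' j))) t := by
    refine HasDerivAt.fun_sum fun i _ => HasDerivAt.fun_sum fun j _ => ?_
    exact (ha i).mul ((hM i j).mul (hb j))
  have e1 : (fun s => ∑ i, ∑ j, a s i * (M s i j * b s j)) =
      (fun s => a s ⬝ᵥ M s *ᵥ b s) := by
    funext s; simp [dotProduct, mulVec, Finset.mul_sum]
  have e2 : (∑ i, ∑ j, (a' i * (M t i j * b t j) +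
        a t i * (Md i j * b t j + M t i j * b' j))) =
      a' ⬝ᵥ M t *ᵥ b t + a t ⬝ᵥ Md *ᵥ b t + a t ⬝ᵥ M t *ᵥ b' := by
    simp [dotProduct, mulVec, Finset.mul_sum, Finset.sum_add_distrib, mul_add]
    ring_nf

  rw [← e1, ← e2]
  exact key

lemma dot_symm {n : ℕ} {A : Matrix (Fin n) (Fin n) ℝ} (hA : A.IsSymm)
    (a b : Fin n → ℝ) : a ⬝ᵥ A *ᵥ b = b ⬝ᵥ A *ᵥ a := by
  rw [dotProduct_mulVec, ← Matrix.vecMul_transpose, hA.eq, dotProduct_comm]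

theorem energy_derivative {n : ℕ}
    (q q' q'' : ℝ → (Fin n → ℝ)) (v : Fin n → ℝ)
    (M M' C : ℝ → Matrix (Fin n) (Fin n) ℝ)
    (K_P K_D : Matrix (Fin n) (Fin n) ℝ)
    (hq : ∀ t, HasDerivAt q (q' t) t)
    (hq' : ∀ t, HasDerivAt q' (q'' t) t)
    (hMsymm : ∀ t, (M t).IsSymm)
    (hKPsymm : K_P.IsSymm)
    (hM : ∀ t, ∀ i j, HasDerivAt (fun s => M s i j) (M' t i j) t)
    (hMdot : ∀ t, M' t = C t + (C t)ᵀ)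
    (hdyn : ∀ t, (M t) *ᵥ (q'' t) + (C t) *ᵥ (q' t) =
      -(K_P *ᵥ (q t - v)) - K_D *ᵥ (q' t))
    (V : ℝ → ℝ)
    (hV : ∀ t, V t = (1/2) * (q' t ⬝ᵥ (M t) *ᵥ (q' t))
      + (1/2) * ((q t - v) ⬝ᵥ K_P *ᵥ (q t - v))) :
    ∀ t, HasDerivAt V (-(q' t ⬝ᵥ K_D *ᵥ (q' t))) t := by
  intro t
  -- componentwise derivatives
  have hqc : ∀ i, HasDerivAt (fun s => q s i) (q' t i) t := fun i =>
    (ContinuousLinearMap.proj (R := ℝ) (φ := fun _ : Fin n => ℝ) i).hasFDerivAt.comp_hasDerivAt t (hq t)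
  have hq'c : ∀ i, HasDerivAt (fun s => q' s i) (q'' t i) t := fun i =>
    (ContinuousLinearMap.proj (R := ℝ) (φ := fun _ : Fin n => ℝ) i).hasFDerivAt.comp_hasDerivAt t (hq' t)
  have hqvc : ∀ i, HasDerivAt (fun s => (q s - v) i) (q' t i) t := fun i => by
    simpa using (hqc i).sub_const (v i)
  have hKc : ∀ (i j : Fin n), HasDerivAt (fun _ : ℝ => K_P i j) ((0 : Matrix (Fin n) (Fin n) ℝ) i j) t :=
    fun i j => by simpa using hasDerivAt_const t (K_P i j)
  have h1 : HasDerivAt (fun s => q' s ⬝ᵥ M s *ᵥ q' s)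
      (q'' t ⬝ᵥ M t *ᵥ q' t + q' t ⬝ᵥ M' t *ᵥ q' t + q' t ⬝ᵥ M t *ᵥ q'' t) t :=
    quad_hasDerivAt hq'c hq'c (hM t)
  have h2 : HasDerivAt (fun s => (q s - v) ⬝ᵥ K_P *ᵥ (q s - v))
      (q' t ⬝ᵥ K_P *ᵥ (q t - v) + (q t - v) ⬝ᵥ (0 : Matrix (Fin n) (Fin n) ℝ) *ᵥ (q t - v)
        + (q t - v) ⬝ᵥ K_P *ᵥ q' t) t :=
    quad_hasDerivAt (M := fun _ => K_P) hqvc hqvc hKc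
  have hVfun : V = fun s => (1/2) * (q' s ⬝ᵥ M s *ᵥ q' s)
      + (1/2) * ((q s - v) ⬝ᵥ K_P *ᵥ (q s - v)) := funext hV
  rw [hVfun]
  have hD := ((h1.const_mul (1/2 : ℝ)).add (h2.const_mul (1/2 : ℝ)))
  convert hD using 1
  case e'_4 => rfl
  case e'_5 => rfl
  case e'_8 => rfl
  -- algebra
  have hMs : q'' t ⬝ᵥ M t *ᵥ q' t = q' t ⬝ᵥ M t *ᵥ q'' t := dot_symm (hMsymm t) _ _
  have hKs : (q t - v) ⬝ᵥ K_P *ᵥ q' t = q' t ⬝ᵥ K_P *ᵥ (q t - v) := dot_symm hKPsymm _ _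
  have hCt : q' t ⬝ᵥ (C t)ᵀ *ᵥ q' t = q' t ⬝ᵥ C t *ᵥ q' t := by
    rw [dotProduct_mulVec, Matrix.vecMul_transpose, dotProduct_comm]
  have hdyn' : q' t ⬝ᵥ M t *ᵥ q'' t + q' t ⬝ᵥ C t *ᵥ q' t =
      -(q' t ⬝ᵥ K_P *ᵥ (q t - v)) - q' t ⬝ᵥ K_D *ᵥ q' t := by
    have := congrArg (fun w => q' t ⬝ᵥ w) (hdyn t)
    simpa [dotProduct_add, dotProduct_sub, dotProduct_neg] using this
  rw [hMs, hKs, hMdot t, Matrix.add_mulVec, dotProduct_add, hCt]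
  simp only [Matrix.zero_mulVec, dotProduct_zero, add_zero]
  linarith [hdyn']
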